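/- Let 1 ≤ i_1 < i_2 < ⋯ < i_r be integers (r ≥ 1), α_1,…,α_r positive integers, and work in the polynomial ring S' = K[x_1,…,x_{i_r}]. Set P = ∏_{q=1}^{r} m_q^{[α_q]} ⊆ S'. Then the saturation of P with respect to the maximal graded ideal satisfies (P : (x_1,…,x_{i_r})^∞) = ∏_{q=1}^{r−1} m_q^{[α_q]}, where (P : T^∞) = ⋃_{k ≥ 1} (P : T^k) and the empty product (case r = 1) is S'. -/

import Mathlib

open MvPolynomial Pointwise

section SatAux

variable {σ : Type*} {K : Type*} [Field K]

private lemma spanM_mul (s t : Set (σ →₀ ℕ)) :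
    Ideal.span ((fun d => monomial d (1 : K)) '' s) *
      Ideal.span ((fun d => monomial d (1 : K)) '' t) =
    Ideal.span ((fun d => monomial d (1 : K)) '' (s + t)) := by
  rw [Ideal.span_mul_span']
  congr 1
  ext g
  constructor
  · rintro ⟨a, ⟨da, hda, rfl⟩, b, ⟨db, hdb, rfl⟩, rfl⟩
    exact ⟨da + db, Set.add_mem_add hda hdb, by simp [monomial_mul]⟩
  · rintro ⟨d, hd, rfl⟩
    rcases Set.mem_add.mp hd with ⟨da, hda, db, hdb, rfl⟩
    exact ⟨monomial da 1, ⟨da, hda, rfl⟩, monomial db 1, ⟨db, hdb, rfl⟩, by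
      simp [monomial_mul]⟩

private lemma spanM_zero :
    Ideal.span ((fun d => monomial d (1 : K)) '' (0 : Set (σ →₀ ℕ))) = ⊤ := by
  rw [← Set.singleton_zero, Set.image_singleton, monomial_zero', C_1, Ideal.span_singleton_one]

private lemma spanM_pow (s : Set (σ →₀ ℕ)) (k : ℕ) :
    Ideal.span ((fun d => monomial d (1 : K)) '' s) ^ k =
      Ideal.span ((fun d => monomial d (1 : K)) '' (k • s)) := by
  induction k with
  | zero => rw [pow_zero, zero_nsmul, spanM_zero, Ideal.one_eq_top]
  | succ k ih => rw [pow_succ, ih, spanM_mul, succ_nsmul]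

private lemma spanM_prod {ι : Type*} (F : Finset ι) (D : ι → Set (σ →₀ ℕ)) :
    (∏ q ∈ F, Ideal.span ((fun d => monomial d (1 : K)) '' D q)) =
      Ideal.span ((fun d => monomial d (1 : K)) '' (∑ q ∈ F, D q)) := by
  classical
  induction F using Finset.induction_on with
  | empty => rw [Finset.prod_empty, Finset.sum_empty, spanM_zero, Ideal.one_eq_top]
  | insert _ _ h ih => rw [Finset.prod_insert h, Finset.sum_insert h, ih, spanM_mul]

private lemma spanM_le {s t : Set (σ →₀ ℕ)} (h : ∀ d ∈ s, ∃ e ∈ t, e ≤ d) :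
    Ideal.span ((fun d => monomial d (1 : K)) '' s) ≤
      Ideal.span ((fun d => monomial d (1 : K)) '' t) := by
  rw [Ideal.span_le]
  rintro g ⟨d, hd, rfl⟩
  rw [SetLike.mem_coe, mem_ideal_span_monomial_image]
  intro xi hxi
  have hxi' : xi = d := Finset.mem_singleton.mp (support_monomial_subset hxi)
  subst hxi'
  exact h _ hd

private lemma spanM_sat {s : Set (σ →₀ ℕ)} {j : σ} (hj : ∀ e ∈ s, e j = 0)
    {f : MvPolynomial σ K} {k : ℕ}
    (hf : f * X j ^ k ∈ Ideal.span ((fun d => monomial d (1 : K)) '' s)) :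
    f ∈ Ideal.span ((fun d => monomial d (1 : K)) '' s) := by
  rw [mem_ideal_span_monomial_image] at hf ⊢
  intro m hm
  have hmem : (m + Finsupp.single j k) ∈ (f * X j ^ k).support := by
    rw [mem_support_iff, X_pow_eq_monomial, coeff_mul_monomial, mul_one]
    exact mem_support_iff.mp hm
  obtain ⟨e, he, hle⟩ := hf _ hmem
  refine ⟨e, he, ?_⟩
  rw [Finsupp.le_def] at hle ⊢
  intro a
  by_cases ha : a = j
  · subst ha
    rw [hj e he]
    exact Nat.zero_le _
  · have h0 : Finsupp.single j k a = 0 := Finsupp.single_eq_of_ne' fun hja => ha hja.symm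
    have := hle a
    rwa [Finsupp.add_apply, h0, add_zero] at this

private lemma sum_apply_eq_zero {ι : Type*} {D : ι → Set (σ →₀ ℕ)} {j : σ} :
    ∀ F : Finset ι, (∀ q ∈ F, ∀ d ∈ D q, d j = 0) → ∀ e ∈ ∑ q ∈ F, D q, e j = 0 := by
  classical
  intro F
  induction F using Finset.induction_on with
  | empty =>
    intro _ e he
    rw [Finset.sum_empty] at he
    rw [Set.mem_zero.mp he]
    rfl
  | @insert a F hnot ih =>
    intro hD e he
    rw [Finset.sum_insert hnot] at he
    rcases Set.mem_add.mp he with ⟨u, hu, v, hv, rfl⟩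
    have h1 := hD a (Finset.mem_insert_self a F) u hu
    have h2 := ih (fun q hq => hD q (Finset.mem_insert_of_mem hq)) v hv
    rw [Finsupp.add_apply, h1, h2]

private lemma smul_range_single_sum {N : ℕ} {k : ℕ} {c : Fin N →₀ ℕ}
    (hc : c ∈ k • Set.range (fun l : Fin N => Finsupp.single l (1 : ℕ))) :
    ∑ l, c l = k := by
  induction k generalizing c with
  | zero =>
    rw [zero_nsmul] at hc
    rw [Set.mem_zero.mp hc]
    simp
  | succ k ih =>
    rw [succ_nsmul] at hc
    rcases Set.mem_add.mp hc with ⟨a, ha, b, ⟨l, rfl⟩, rfl⟩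
    have := ih ha
    simp only [Finsupp.add_apply, Finset.sum_add_distrib, this, Finsupp.single_apply]
    rw [Finset.sum_ite_eq]
    simp

end SatAux

/-- `(I : T^∞) = ⋃_{k ≥ 1} (I : T^k)`. -/
noncomputable def satIdeal {N : ℕ} {K : Type*} [Field K]
    (I T : Ideal (MvPolynomial (Fin N) K)) : Ideal (MvPolynomial (Fin N) K) :=
  ⨆ k ∈ {k : ℕ | 1 ≤ k}, Submodule.colon I ((T ^ k : Ideal (MvPolynomial (Fin N) K)) : Set (MvPolynomial (Fin N) K))

/-- In `S' = K[x_1,…,x_{i_r}]` (variables `X l`, `x_j = X l` with `l + 1 = j`), for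
`P = ∏_{q=1}^r (x_1^{α_q},…,x_{i_q}^{α_q})` with `1 ≤ i_1 < ⋯ < i_r`, the saturation
with respect to the maximal graded ideal is
`(P : (x_1,…,x_{i_r})^∞) = ∏_{q=1}^{r-1} (x_1^{α_q},…,x_{i_q}^{α_q})`,
the empty product (case `r = 1`) being `S'`. -/
theorem saturation_of_principal_sbt {K : Type*} [Field K]
    (r : ℕ) (hr : 1 ≤ r) (i α : ℕ → ℕ)
    (hi1 : 1 ≤ i 1) (himono : StrictMonoOn i (Set.Icc 1 r))
    (hα : ∀ q ∈ Finset.Icc 1 r, 1 ≤ α q) :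
    satIdeal
      (∏ q ∈ Finset.Icc 1 r,
        Ideal.span {g : MvPolynomial (Fin (i r)) K |
          ∃ l : Fin (i r), (l : ℕ) < i q ∧ g = X l ^ α q})
      (Ideal.span (Set.range (X : Fin (i r) → MvPolynomial (Fin (i r)) K))) =
    ∏ q ∈ Finset.Icc 1 (r - 1),
      Ideal.span {g : MvPolynomial (Fin (i r)) K |
        ∃ l : Fin (i r), (l : ℕ) < i q ∧ g = X l ^ α q} := by
  classical
  have hir : 1 ≤ i r :=
    le_trans hi1 (himono.monotoneOn ⟨le_refl 1, hr⟩ ⟨hr, le_refl r⟩ hr)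
  set D : ℕ → Set (Fin (i r) →₀ ℕ) :=
    fun q => (fun l : Fin (i r) => Finsupp.single l (α q)) '' {l | (l : ℕ) < i q} with hD
  set D₀ : Set (Fin (i r) →₀ ℕ) :=
    Set.range (fun l : Fin (i r) => Finsupp.single l (1 : ℕ)) with hD₀
  have hXmono : ∀ l : Fin (i r),
      (X l : MvPolynomial (Fin (i r)) K) = monomial (Finsupp.single l 1) 1 := by
    intro l
    rw [← X_pow_eq_monomial, pow_one]
  have hspan : ∀ q, Ideal.span {g : MvPolynomial (Fin (i r)) K |
      ∃ l : Fin (i r), (l : ℕ) < i q ∧ g = X l ^ α q} =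
      Ideal.span ((fun d => monomial d (1 : K)) '' D q) := by
    intro q
    congr 1
    ext g
    simp only [Set.mem_setOf_eq, Set.mem_image, hD]
    constructor
    · rintro ⟨l, hl, rfl⟩
      exact ⟨Finsupp.single l (α q), ⟨l, hl, rfl⟩, X_pow_eq_monomial.symm⟩
    · rintro ⟨d, ⟨l, hl, rfl⟩, rfl⟩
      exact ⟨l, hl, X_pow_eq_monomial.symm⟩
  have hT : Ideal.span (Set.range (X : Fin (i r) → MvPolynomial (Fin (i r)) K)) =
      Ideal.span ((fun d => monomial d (1 : K)) '' D₀) := by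
    congr 1
    ext g
    simp only [Set.mem_range, Set.mem_image, hD₀]
    constructor
    · rintro ⟨l, rfl⟩
      exact ⟨Finsupp.single l 1, ⟨l, rfl⟩, (hXmono l).symm⟩
    · rintro ⟨d, ⟨l, rfl⟩, rfl⟩
      exact ⟨l, (hXmono l).symm⟩
  have hPdef : (∏ q ∈ Finset.Icc 1 r,
      Ideal.span {g : MvPolynomial (Fin (i r)) K |
        ∃ l : Fin (i r), (l : ℕ) < i q ∧ g = X l ^ α q}) =
      Ideal.span ((fun d => monomial d (1 : K)) '' ∑ q ∈ Finset.Icc 1 r, D q) := by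
    rw [Finset.prod_congr rfl fun q _ => hspan q, spanM_prod]
  have hQdef : (∏ q ∈ Finset.Icc 1 (r - 1),
      Ideal.span {g : MvPolynomial (Fin (i r)) K |
        ∃ l : Fin (i r), (l : ℕ) < i q ∧ g = X l ^ α q}) =
      Ideal.span ((fun d => monomial d (1 : K)) '' ∑ q ∈ Finset.Icc 1 (r - 1), D q) := by
    rw [Finset.prod_congr rfl fun q _ => hspan q, spanM_prod]
  rw [hPdef, hQdef, hT]
  set EP : Set (Fin (i r) →₀ ℕ) := ∑ q ∈ Finset.Icc 1 r, D q with hEPdef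
  set EQ : Set (Fin (i r) →₀ ℕ) := ∑ q ∈ Finset.Icc 1 (r - 1), D q with hEQdef
  have hsplit : Finset.Icc 1 r = insert r (Finset.Icc 1 (r - 1)) := by
    ext q
    simp only [Finset.mem_Icc, Finset.mem_insert]
    omega
  have hnotmem : r ∉ Finset.Icc 1 (r - 1) := by
    simp only [Finset.mem_Icc]
    omega
  have hEP : EP = D r + EQ := by
    rw [hEPdef, hsplit, Finset.sum_insert hnotmem]
  have hαr : 1 ≤ α r := hα r (Finset.mem_Icc.mpr ⟨hr, le_refl r⟩)
  apply le_antisymm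
  · -- saturation ≤ Q
    by_cases hr1 : r = 1
    · subst hr1
      have : EQ = 0 := by rw [hEQdef]; simp
      rw [this, spanM_zero]
      exact le_top
    have hr2 : 2 ≤ r := by omega
    set lst : Fin (i r) := ⟨i r - 1, by omega⟩ with hlst
    have hQzero : ∀ e ∈ EQ, e lst = 0 := by
      refine sum_apply_eq_zero (Finset.Icc 1 (r - 1)) ?_
      rintro q hq d ⟨l, hl, rfl⟩
      rw [Finset.mem_Icc] at hq
      have hl' : (l : ℕ) < i q := hl
      have hmo : i q ≤ i (r - 1) :=
        himono.monotoneOn ⟨hq.1, le_trans hq.2 (by omega)⟩ ⟨by omega, by omega⟩ hq.2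
      have hlt : i (r - 1) < i r :=
        himono ⟨by omega, by omega⟩ ⟨hr, le_refl r⟩ (by omega)
      have hne : l ≠ lst := by
        have hv : (l : ℕ) ≠ i r - 1 := by omega
        exact fun h => hv (by rw [h])
      exact Finsupp.single_eq_of_ne' hne
    refine iSup₂_le fun k hk => ?_
    intro f hf
    have hPQ : Ideal.span ((fun d => monomial d (1 : K)) '' EP) ≤
        Ideal.span ((fun d => monomial d (1 : K)) '' EQ) := by
      rw [hEP]
      apply spanM_le
      intro d hd
      rcases Set.mem_add.mp hd with ⟨a, _, b, hb, rfl⟩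
      exact ⟨b, hb, le_add_self⟩
    have hxm : (X lst : MvPolynomial (Fin (i r)) K) ∈
        Ideal.span ((fun d => monomial d (1 : K)) '' D₀) :=
      Ideal.subset_span ⟨Finsupp.single lst 1, ⟨lst, rfl⟩, (hXmono lst).symm⟩
    have hxk : (X lst : MvPolynomial (Fin (i r)) K) ^ k ∈
        Ideal.span ((fun d => monomial d (1 : K)) '' D₀) ^ k :=
      Ideal.pow_mem_pow hxm k
    have h1 : f * X lst ^ k ∈ Ideal.span ((fun d => monomial d (1 : K)) '' EQ) := by
      apply hPQ
      have := Submodule.mem_colon.mp hf _ hxk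
      rwa [smul_eq_mul] at this
    exact spanM_sat hQzero h1
  · -- Q ≤ saturation
    set k : ℕ := i r * α r with hkdef
    have hk1 : 1 ≤ k := by
      rw [hkdef]
      exact Nat.one_le_iff_ne_zero.mpr (by positivity)
    have hmul : Ideal.span ((fun d => monomial d (1 : K)) '' EQ) *
        Ideal.span ((fun d => monomial d (1 : K)) '' D₀) ^ k ≤
        Ideal.span ((fun d => monomial d (1 : K)) '' EP) := by
      rw [spanM_pow, spanM_mul]
      apply spanM_le
      intro d hd
      rcases Set.mem_add.mp hd with ⟨a, ha, c, hc, rfl⟩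
      have hsum : ∑ l, c l = k := smul_range_single_sum hc
      obtain ⟨l, hl⟩ : ∃ l : Fin (i r), α r ≤ c l := by
        by_contra h
        push_neg at h
        have hle : ∑ l, c l ≤ ∑ _l : Fin (i r), (α r - 1) :=
          Finset.sum_le_sum fun l _ => by have := h l; omega
        rw [hsum, Finset.sum_const, Finset.card_univ, Fintype.card_fin, smul_eq_mul,
          hkdef] at hle
        have := Nat.le_of_mul_le_mul_left hle (by omega : 0 < i r)
        omega
      refine ⟨Finsupp.single l (α r) + a, ?_, ?_⟩
      · rw [hEP]
        exact Set.add_mem_add ⟨l, l.isLt, rfl⟩ ha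
      · rw [add_comm]
        exact add_le_add_right (Finsupp.single_le_iff.mpr hl) a
    have hcolon : Ideal.span ((fun d => monomial d (1 : K)) '' EQ) ≤
        Submodule.colon (Ideal.span ((fun d => monomial d (1 : K)) '' EP))
          (((Ideal.span ((fun d => monomial d (1 : K)) '' D₀)) ^ k : Ideal (MvPolynomial (Fin (i r)) K)) : Set (MvPolynomial (Fin (i r)) K)) := by
      intro f hf
      refine Submodule.mem_colon.mpr fun p hp => ?_
      rw [smul_eq_mul]
      exact hmul (Ideal.mul_mem_mul hf hp)
    refine le_trans hcolon ?_
    exact le_iSup₂ (f := fun (k : ℕ) (_ : k ∈ {k : ℕ | 1 ≤ k}) =>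
      Submodule.colon (Ideal.span ((fun d => monomial d (1 : K)) '' EP))
        (((Ideal.span ((fun d => monomial d (1 : K)) '' D₀)) ^ k : Ideal (MvPolynomial (Fin (i r)) K)) : Set (MvPolynomial (Fin (i r)) K))) k hk1
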